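/- Let A be an m×n real matrix and α ≥ 0 a real number. For x ∈ ℝᵐ and y ∈ ℝⁿ define the CGO field of the bilinear game f(x,y) = xᵀAy by g_α(x,y) = ((I+α²AAᵀ)⁻¹(Ay + α AAᵀ x), (I+α²AᵀA)⁻¹(−Aᵀx + α AᵀA y)). Then ⟨g_α(x,y),(x,y)⟩ = α·( xᵀ(I+α²AAᵀ)⁻¹AAᵀx + yᵀ(I+α²AᵀA)⁻¹AᵀAy ). Consequently ⟨g_α(x,y),(x,y)⟩ ≥ 0 for every (x,y), and for α = 0 one has ⟨g₀(x,y),(x,y)⟩ = xᵀAy − yᵀAᵀx = 0 for every (x,y) (null coherence of the bilinear game). -/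

import Mathlib

open Matrix

/-- The CGO field of the bilinear game `f(x,y) = xᵀ A y`. -/
noncomputable def gCGO {m n : ℕ} (A : Matrix (Fin m) (Fin n) ℝ) (α : ℝ)
    (x : Fin m → ℝ) (y : Fin n → ℝ) : (Fin m → ℝ) × (Fin n → ℝ) :=
  (((1 + α ^ 2 • (A * Aᵀ))⁻¹).mulVec (A.mulVec y + α • (A * Aᵀ).mulVec x),
   ((1 + α ^ 2 • (Aᵀ * A))⁻¹).mulVec (-(Aᵀ.mulVec x) + α • (Aᵀ * A).mulVec y))

lemma gCGO_posDef_aux {m n : ℕ} (A : Matrix (Fin m) (Fin n) ℝ) (α : ℝ) :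
    (1 + α ^ 2 • (A * Aᵀ)).PosDef := by
  have h1 : α ^ 2 • (A * Aᵀ) = (α • A) * (α • A)ᵀ := by
    rw [transpose_smul, Matrix.smul_mul, Matrix.mul_smul, smul_smul, sq]
  rw [h1]
  exact Matrix.PosDef.add_posSemidef Matrix.PosDef.one
    (by simpa [conjTranspose_eq_transpose_of_trivial] using
      posSemidef_self_mul_conjTranspose (α • A))

lemma gCGO_key {m n : ℕ} (A : Matrix (Fin m) (Fin n) ℝ) (α : ℝ) :
    (1 + α ^ 2 • (A * Aᵀ))⁻¹ * A = A * (1 + α ^ 2 • (Aᵀ * A))⁻¹ := by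
  have hM : IsUnit (1 + α ^ 2 • (A * Aᵀ)).det :=
    isUnit_iff_ne_zero.mpr (gCGO_posDef_aux A α).det_pos.ne'
  have hN : IsUnit (1 + α ^ 2 • (Aᵀ * A)).det :=
    isUnit_iff_ne_zero.mpr (by simpa using (gCGO_posDef_aux Aᵀ α).det_pos.ne')
  have hswap : A * (1 + α ^ 2 • (Aᵀ * A)) = (1 + α ^ 2 • (A * Aᵀ)) * A := by
    simp [Matrix.mul_add, Matrix.add_mul, Matrix.mul_smul, Matrix.smul_mul,
      Matrix.mul_assoc]
  calc (1 + α ^ 2 • (A * Aᵀ))⁻¹ * A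
      = (1 + α ^ 2 • (A * Aᵀ))⁻¹ * (A * (1 + α ^ 2 • (Aᵀ * A)) *
          (1 + α ^ 2 • (Aᵀ * A))⁻¹) := by
        rw [Matrix.mul_nonsing_inv_cancel_right _ _ hN]
    _ = A * (1 + α ^ 2 • (Aᵀ * A))⁻¹ := by
        rw [hswap, ← Matrix.mul_assoc, ← Matrix.mul_assoc,
          Matrix.nonsing_inv_mul _ hM, Matrix.one_mul]

theorem bilinear_game_gCGO_inner (m n : ℕ) (A : Matrix (Fin m) (Fin n) ℝ) (α : ℝ)
    (hα : 0 ≤ α) (x : Fin m → ℝ) (y : Fin n → ℝ) :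
    (gCGO A α x y).1 ⬝ᵥ x + (gCGO A α x y).2 ⬝ᵥ y =
      α * (x ⬝ᵥ (((1 + α ^ 2 • (A * Aᵀ))⁻¹ * (A * Aᵀ)).mulVec x) +
           y ⬝ᵥ (((1 + α ^ 2 • (Aᵀ * A))⁻¹ * (Aᵀ * A)).mulVec y)) ∧
    0 ≤ (gCGO A α x y).1 ⬝ᵥ x + (gCGO A α x y).2 ⬝ᵥ y ∧
    (gCGO A 0 x y).1 ⬝ᵥ x + (gCGO A 0 x y).2 ⬝ᵥ y =
      x ⬝ᵥ A.mulVec y - y ⬝ᵥ Aᵀ.mulVec x ∧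
    x ⬝ᵥ A.mulVec y - y ⬝ᵥ Aᵀ.mulVec x = 0 := by
  set M := 1 + α ^ 2 • (A * Aᵀ) with hMdef
  set N := 1 + α ^ 2 • (Aᵀ * A) with hNdef
  have hMpd : M.PosDef := gCGO_posDef_aux A α
  have hNpd : N.PosDef := by simpa [hNdef] using gCGO_posDef_aux Aᵀ α
  have hBpd : (M⁻¹).PosDef := hMpd.inv
  have hCpd : (N⁻¹).PosDef := hNpd.inv
  have hkey : M⁻¹ * A = A * N⁻¹ := gCGO_key A α
  have hMsymm : Mᵀ = M := by
    simp [hMdef, transpose_add, transpose_smul, transpose_mul]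
  have hNsymm : Nᵀ = N := by
    simp [hNdef, transpose_add, transpose_smul, transpose_mul]
  have hBsymm : (M⁻¹)ᵀ = M⁻¹ := by rw [transpose_nonsing_inv, hMsymm]
  have hCsymm : (N⁻¹)ᵀ = N⁻¹ := by rw [transpose_nonsing_inv, hNsymm]
  have hkeyT : Aᵀ * M⁻¹ = N⁻¹ * Aᵀ := by
    have := congrArg Matrix.transpose hkey
    simpa [transpose_mul, hBsymm, hCsymm] using this
  -- cross term cancellation
  have hcross : M⁻¹ *ᵥ (A *ᵥ y) ⬝ᵥ x = N⁻¹ *ᵥ (Aᵀ *ᵥ x) ⬝ᵥ y := by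
    conv_lhs => rw [mulVec_mulVec, dotProduct_comm, dotProduct_mulVec,
      ← mulVec_transpose, transpose_mul, hBsymm, hkeyT]
    rw [mulVec_mulVec]
  -- quadratic terms
  have hq1 : M⁻¹ *ᵥ ((A * Aᵀ) *ᵥ x) ⬝ᵥ x = x ⬝ᵥ (M⁻¹ * (A * Aᵀ)) *ᵥ x := by
    rw [mulVec_mulVec, dotProduct_comm]
  have hq2 : N⁻¹ *ᵥ ((Aᵀ * A) *ᵥ y) ⬝ᵥ y = y ⬝ᵥ (N⁻¹ * (Aᵀ * A)) *ᵥ y := by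
    rw [mulVec_mulVec, dotProduct_comm]
  have hmain : (gCGO A α x y).1 ⬝ᵥ x + (gCGO A α x y).2 ⬝ᵥ y =
      α * (x ⬝ᵥ ((M⁻¹ * (A * Aᵀ)) *ᵥ x) + y ⬝ᵥ ((N⁻¹ * (Aᵀ * A)) *ᵥ y)) := by
    show (M⁻¹ *ᵥ (A *ᵥ y + α • ((A * Aᵀ) *ᵥ x))) ⬝ᵥ x +
        (N⁻¹ *ᵥ (-(Aᵀ *ᵥ x) + α • ((Aᵀ * A) *ᵥ y))) ⬝ᵥ y = _
    rw [mulVec_add, mulVec_add, mulVec_smul, mulVec_smul, mulVec_neg,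
      add_dotProduct, add_dotProduct, smul_dotProduct, smul_dotProduct,
      neg_dotProduct, hcross, hq1, hq2, smul_eq_mul, smul_eq_mul]
    ring
  refine ⟨hmain, ?_, ?_, ?_⟩
  · rw [hmain]
    have h1 : 0 ≤ x ⬝ᵥ ((M⁻¹ * (A * Aᵀ)) *ᵥ x) := by
      have : M⁻¹ * (A * Aᵀ) = A * (N⁻¹ * Aᵀ) := by
        rw [← Matrix.mul_assoc, hkey, Matrix.mul_assoc]
      rw [this, ← mulVec_mulVec, ← mulVec_mulVec, dotProduct_mulVec,
        ← mulVec_transpose]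
      simpa using hCpd.posSemidef.dotProduct_mulVec_nonneg (Aᵀ *ᵥ x)
    have h2 : 0 ≤ y ⬝ᵥ ((N⁻¹ * (Aᵀ * A)) *ᵥ y) := by
      have : N⁻¹ * (Aᵀ * A) = Aᵀ * (M⁻¹ * A) := by
        rw [← Matrix.mul_assoc, ← hkeyT, Matrix.mul_assoc]
      rw [this, ← mulVec_mulVec, ← mulVec_mulVec, dotProduct_mulVec,
        ← mulVec_transpose, transpose_transpose]
      simpa using hBpd.posSemidef.dotProduct_mulVec_nonneg (A *ᵥ y)
    exact mul_nonneg hα (add_nonneg h1 h2)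
  · show (((1:Matrix (Fin m) (Fin m) ℝ) + (0:ℝ) ^ 2 • (A * Aᵀ))⁻¹ *ᵥ
        (A *ᵥ y + (0:ℝ) • ((A * Aᵀ) *ᵥ x))) ⬝ᵥ x +
      (((1:Matrix (Fin n) (Fin n) ℝ) + (0:ℝ) ^ 2 • (Aᵀ * A))⁻¹ *ᵥ
        (-(Aᵀ *ᵥ x) + (0:ℝ) • ((Aᵀ * A) *ᵥ y))) ⬝ᵥ y = _
    simp [dotProduct_comm, sub_eq_add_neg]
  · rw [dotProduct_mulVec, dotProduct_comm, mulVec_transpose, sub_self]
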